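/- Let p be an odd prime and n ≥ 1. The set {1, ω(1), ω(2), ..., ω((p−1)/2 · p^{n−1} − 1)}, where ω(k) = ζ_{p^n}^k + ζ_{p^n}^{−k}, is a ℤ-basis of the ring of integers of the maximal real subfield K_{p^n}^+ = ℚ(ζ_{p^n} + ζ_{p^n}^{−1}) of the p^n-th cyclotomic field. -/

import Mathlib

open Complex Polynomial Finset

section Aux
variable {p q h N d : ℕ} {ζ : ℂ}

private lemma v_eq_w (k : ℕ) : ζ ^ (k:ℤ) + ζ ^ (-(k:ℤ)) = ζ ^ k + ζ⁻¹ ^ k := by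
  rw [zpow_natCast, zpow_neg, zpow_natCast, inv_pow]

private lemma v_even (s : ℤ) : ζ ^ (-s) + ζ ^ (-(-s)) = ζ ^ s + ζ ^ (-s) := by
  rw [neg_neg, add_comm]

private lemma v_abs (s : ℤ) :
    ζ ^ s + ζ ^ (-s) = ζ ^ s.natAbs + ζ⁻¹ ^ s.natAbs := by
  rcases Int.natAbs_eq s with he | he
  · rw [← v_eq_w, ← he]
  · rw [← v_eq_w, ← neg_neg (s.natAbs : ℤ), ← he, v_even]

private lemma geo1 (hp1 : 1 < p) (hζ : IsPrimitiveRoot ζ N) (hN : N = p * q) (hq : 0 < q)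
    (t : ℤ) : ∑ i ∈ range p, ζ ^ (t + (i:ℤ) * (q:ℤ)) = 0 := by
  have hζ0 : ζ ≠ 0 := hζ.ne_zero (by rw [hN]; exact Nat.mul_ne_zero (by omega) (by omega))
  have hμ : IsPrimitiveRoot (ζ ^ q) p :=
    hζ.pow (by rw [hN]; exact Nat.mul_pos (by omega) hq) (by rw [hN, mul_comm])
  calc ∑ i ∈ range p, ζ ^ (t + (i:ℤ) * (q:ℤ))
      = ∑ i ∈ range p, ζ ^ t * ((ζ ^ q) ^ i) := by
        refine Finset.sum_congr rfl fun i _ => ?_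
        rw [zpow_add₀ hζ0, ← zpow_natCast ζ q, ← zpow_natCast (ζ ^ (q:ℤ)) i, ← zpow_mul,
          mul_comm (q:ℤ)]
    _ = ζ ^ t * ∑ i ∈ range p, (ζ ^ q) ^ i := by rw [Finset.mul_sum]
    _ = 0 := by rw [hμ.geom_sum_eq_zero hp1, mul_zero]

private lemma geo2 (hp1 : 1 < p) (hζ : IsPrimitiveRoot ζ N) (hN : N = p * q) (hq : 0 < q)
    (t : ℤ) : ∑ i ∈ range p, ζ ^ (t - (i:ℤ) * (q:ℤ)) = 0 := by
  have hζ0 : ζ ≠ 0 := hζ.ne_zero (by rw [hN]; exact Nat.mul_ne_zero (by omega) (by omega))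
  have hμ : IsPrimitiveRoot (ζ ^ q) p :=
    hζ.pow (by rw [hN]; exact Nat.mul_pos (by omega) hq) (by rw [hN, mul_comm])
  have hμ' : IsPrimitiveRoot (ζ ^ q)⁻¹ p := hμ.inv
  calc ∑ i ∈ range p, ζ ^ (t - (i:ℤ) * (q:ℤ))
      = ∑ i ∈ range p, ζ ^ t * ((ζ ^ q)⁻¹ ^ i) := by
        refine Finset.sum_congr rfl fun i _ => ?_
        rw [sub_eq_add_neg, zpow_add₀ hζ0, inv_pow, ← zpow_natCast ζ q,
          ← zpow_natCast (ζ ^ (q:ℤ)) i, ← zpow_mul, ← zpow_neg, mul_comm (q:ℤ)]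
    _ = ζ ^ t * ∑ i ∈ range p, (ζ ^ q)⁻¹ ^ i := by rw [Finset.mul_sum]
    _ = 0 := by rw [hμ'.geom_sum_eq_zero hp1, mul_zero]

private lemma vrel (hp1 : 1 < p) (hζ : IsPrimitiveRoot ζ N) (hN : N = p * q) (hq : 0 < q)
    (r : ℤ) : ∑ i ∈ range p, (ζ ^ (r - (i:ℤ) * (q:ℤ)) + ζ ^ (-(r - (i:ℤ) * (q:ℤ)))) = 0 := by
  rw [Finset.sum_add_distrib, geo2 hp1 hζ hN hq r]
  rw [show (∑ i ∈ range p, ζ ^ (-(r - (i:ℤ) * (q:ℤ)))) =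
      ∑ i ∈ range p, ζ ^ (-r + (i:ℤ) * (q:ℤ)) from Finset.sum_congr rfl fun i _ => by ring_nf,
    geo1 hp1 hζ hN hq (-r), add_zero]

private lemma w_mem_span (hp : p.Prime) (hph : p = 2 * h + 1) (h1 : 1 ≤ h) (hq1 : 1 ≤ q)
    (hζ : IsPrimitiveRoot ζ N) (hN : N = p * q) (hd : d = h * q) (hNodd : N % 2 = 1) (j : ℕ) :
    ζ ^ j + ζ⁻¹ ^ j ∈ Submodule.span ℤ (Set.range
      (fun k : Fin d => if (k:ℕ) = 0 then (1:ℂ) else ζ ^ (k:ℕ) + ζ⁻¹ ^ (k:ℕ))) := by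
  set f : Fin d → ℂ := fun k => if (k:ℕ) = 0 then (1:ℂ) else ζ ^ (k:ℕ) + ζ⁻¹ ^ (k:ℕ) with hf
  set S := Submodule.span ℤ (Set.range f) with hS
  have hp1 : 1 < p := hp.one_lt
  have hd0 : 0 < d := by rw [hd]; exact Nat.mul_pos h1 hq1
  have hN0 : 0 < N := by rw [hN]; exact Nat.mul_pos (by omega) hq1
  have hζ0 : ζ ≠ 0 := hζ.ne_zero (by omega)
  have hζN : ζ ^ N = 1 := hζ.pow_eq_one
  have hdz : (d:ℤ) = (h:ℤ) * (q:ℤ) := by exact_mod_cast congrArg (Nat.cast : ℕ → ℤ) hd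
  have hNd : (N:ℤ) = 2 * (d:ℤ) + (q:ℤ) := by
    have hNz : (N:ℤ) = (p:ℤ) * (q:ℤ) := by exact_mod_cast congrArg (Nat.cast : ℕ → ℤ) hN
    have hpz : (p:ℤ) = 2 * (h:ℤ) + 1 := by exact_mod_cast congrArg (Nat.cast : ℕ → ℤ) hph
    rw [hNz, hpz, hdz]; ring
  have h1S : (1:ℂ) ∈ S := Submodule.subset_span ⟨⟨0, hd0⟩, by simp [hf]⟩
  -- base case : |s| < d
  have hbase : ∀ s : ℤ, s.natAbs < d → ζ ^ s + ζ ^ (-s) ∈ S := by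
    intro s hs
    rw [v_abs]
    rcases Nat.eq_zero_or_pos s.natAbs with h0 | h0
    · rw [h0]
      have : (ζ:ℂ) ^ (0:ℕ) + ζ⁻¹ ^ (0:ℕ) = (2:ℤ) • (1:ℂ) := by norm_num
      rw [this]
      exact S.smul_mem _ h1S
    · refine Submodule.subset_span ⟨⟨s.natAbs, hs⟩, ?_⟩
      simp [hf, Nat.pos_iff_ne_zero.mp h0]
  -- case A : d < r, 2r < N
  have hcaseA : ∀ r : ℕ, d < r → 2 * r < N → ζ ^ r + ζ⁻¹ ^ r ∈ S := by
    intro r hdr h2r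
    set G : ℕ → ℂ := fun i => ζ ^ ((r:ℤ) - (i:ℤ) * (q:ℤ)) + ζ ^ (-((r:ℤ) - (i:ℤ) * (q:ℤ)))
      with hG
    have e0 : ∑ i ∈ range p, G i = 0 := vrel hp1 hζ hN (by omega) (r : ℤ)
    rw [show p = (p - 1) + 1 by omega, Finset.sum_range_succ'] at e0
    have h0 : G 0 = ζ ^ (r:ℤ) + ζ ^ (-(r:ℤ)) := by simp [hG]
    rw [h0] at e0
    rw [← v_eq_w, eq_neg_of_add_eq_zero_right e0]
    refine S.neg_mem (Submodule.sum_mem _ fun i hi => ?_)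
    rw [Finset.mem_range] at hi
    have hG1 : G (i + 1) = ζ ^ ((r:ℤ) - ((i:ℤ)+1) * (q:ℤ)) +
        ζ ^ (-((r:ℤ) - ((i:ℤ)+1) * (q:ℤ))) := by
      rw [hG]; push_cast; ring_nf
    rw [hG1]
    refine hbase _ ?_
    have hq0 : (0:ℤ) ≤ (q:ℤ) := by positivity
    have ht1 : (q:ℤ) ≤ ((i:ℤ) + 1) * (q:ℤ) := le_mul_of_one_le_left hq0 (by omega)
    have ht2 : ((i:ℤ) + 1) * (q:ℤ) ≤ 2 * (d:ℤ) := by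
      refine le_trans (mul_le_mul_of_nonneg_right (show ((i:ℤ)+1) ≤ (p:ℤ) - 1 by push_cast; omega) hq0) ?_
      have hpz : (p:ℤ) = 2 * (h:ℤ) + 1 := by exact_mod_cast congrArg (Nat.cast : ℕ → ℤ) hph
      rw [hpz, hdz]; ring_nf; omega
    omega
  -- case B : r = d
  have hcaseB : ζ ^ d + ζ⁻¹ ^ d ∈ S := by
    set F : ℕ → ℂ := fun i => ζ ^ ((d:ℤ) - (i:ℤ) * (q:ℤ)) + ζ ^ (-((d:ℤ) - (i:ℤ) * (q:ℤ)))
      with hF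
    have e0 : ∑ i ∈ range p, F i = 0 := vrel hp1 hζ hN (by omega) (d : ℤ)
    rw [hph, show 2 * h + 1 = (h + 1) + h by ring, Finset.sum_range_add,
      Finset.sum_range_succ] at e0
    have eFh : F h = 2 := by
      have h0 : (d:ℤ) - (h:ℤ) * (q:ℤ) = 0 := by rw [hdz]; ring
      show ζ ^ ((d:ℤ) - (h:ℤ) * (q:ℤ)) + ζ ^ (-((d:ℤ) - (h:ℤ) * (q:ℤ))) = 2
      rw [h0]; norm_num
    have e2 : ∑ i ∈ range h, F (h + 1 + i) = ∑ i ∈ range h, F i := by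
      rw [← Finset.sum_range_reflect F h]
      refine Finset.sum_congr rfl fun i hi => ?_
      rw [Finset.mem_range] at hi
      have harg : (d:ℤ) - ((h + 1 + i : ℕ):ℤ) * (q:ℤ) =
          -((d:ℤ) - ((h - 1 - i : ℕ):ℤ) * (q:ℤ)) := by
        have hc : ((h - 1 - i : ℕ):ℤ) = (h:ℤ) - 1 - (i:ℤ) := by omega
        rw [hc]
        push_cast
        linear_combination (2:ℤ) * hdz
      show ζ ^ ((d:ℤ) - _ * _) + ζ ^ (-((d:ℤ) - _ * _)) = F (h - 1 - i)
      rw [harg, v_even]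
    rw [eFh, e2] at e0
    have e3 : ∑ i ∈ range h, F i = F 0 + ∑ i ∈ range (h - 1), F (i + 1) := by
      conv_lhs => rw [show h = (h - 1) + 1 by omega, Finset.sum_range_succ']
      exact add_comm _ _
    rw [e3] at e0
    have eF0 : F 0 = ζ ^ (d:ℤ) + ζ ^ (-(d:ℤ)) := by simp [hF]
    rw [eF0] at e0
    have hkey : ζ ^ (d:ℤ) + ζ ^ (-(d:ℤ)) =
        -1 + -∑ i ∈ range (h - 1), F (i + 1) := by
      linear_combination e0 / 2
    rw [← v_eq_w, hkey]
    refine S.add_mem (S.neg_mem h1S) (S.neg_mem (Submodule.sum_mem _ fun i hi => ?_))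
    rw [Finset.mem_range] at hi
    have hF1 : F (i + 1) = ζ ^ ((d:ℤ) - ((i:ℤ)+1) * (q:ℤ)) +
        ζ ^ (-((d:ℤ) - ((i:ℤ)+1) * (q:ℤ))) := by
      rw [hF]; push_cast; ring_nf
    rw [hF1]
    refine hbase _ ?_
    have hq0 : (0:ℤ) ≤ (q:ℤ) := by positivity
    have ht1 : (q:ℤ) ≤ ((i:ℤ) + 1) * (q:ℤ) := le_mul_of_one_le_left hq0 (by omega)
    have ht2 : ((i:ℤ) + 1) * (q:ℤ) ≤ (d:ℤ) - (q:ℤ) := by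
      refine le_trans (mul_le_mul_of_nonneg_right (show ((i:ℤ)+1) ≤ (h:ℤ) - 1 by push_cast; omega) hq0) ?_
      rw [hdz]; ring_nf; omega
    omega
  -- reduction
  have hζiN : ζ⁻¹ ^ N = 1 := by rw [inv_pow, hζN, inv_one]
  have hmod : ∀ j : ℕ, ζ ^ j + ζ⁻¹ ^ j = ζ ^ (j % N) + ζ⁻¹ ^ (j % N) := by
    intro j
    have h1 : (ζ:ℂ) ^ j = ζ ^ (j % N) := by
      conv_lhs => rw [← Nat.div_add_mod j N]
      rw [pow_add, pow_mul, hζN, one_pow, one_mul]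
    have h2 : (ζ⁻¹:ℂ) ^ j = ζ⁻¹ ^ (j % N) := by
      conv_lhs => rw [← Nat.div_add_mod j N]
      rw [pow_add, pow_mul, hζiN, one_pow, one_mul]
    rw [h1, h2]
  have hrefl : ∀ r : ℕ, r ≤ N → ζ ^ (N - r) + ζ⁻¹ ^ (N - r) = ζ ^ r + ζ⁻¹ ^ r := by
    intro r hr
    have h1 : (ζ:ℂ) ^ (N - r) = ζ⁻¹ ^ r := by
      rw [inv_pow]
      refine eq_inv_of_mul_eq_one_left ?_
      rw [← pow_add, Nat.sub_add_cancel hr, hζN]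
    have h2 : (ζ⁻¹:ℂ) ^ (N - r) = ζ ^ r := by
      rw [inv_pow, h1, inv_pow, inv_inv]
    rw [h1, h2, add_comm]
  have haux : ∀ r : ℕ, r < N → 2 * r ≤ N → ζ ^ r + ζ⁻¹ ^ r ∈ S := by
    intro r hrN h2r
    rcases lt_trichotomy r d with hlt | heq | hgt
    · have := hbase (r : ℤ) (by simpa using hlt)
      rwa [v_eq_w] at this
    · rw [heq]; exact hcaseB
    · exact hcaseA r hgt (by omega)
  rw [hmod j]
  have hrN : j % N < N := Nat.mod_lt _ (by omega)
  rcases le_or_gt (2 * (j % N)) N with h2r | h2r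
  · exact haux _ hrN h2r
  · rw [← hrefl (j % N) hrN.le]
    exact haux (N - j % N) (by omega) (by omega)

private lemma theta_mul_mem (hp : p.Prime) (hph : p = 2 * h + 1) (h1 : 1 ≤ h) (hq1 : 1 ≤ q)
    (hζ : IsPrimitiveRoot ζ N) (hN : N = p * q) (hd : d = h * q) (hNodd : N % 2 = 1) :
    ∀ x ∈ Submodule.span ℤ (Set.range
      (fun k : Fin d => if (k:ℕ) = 0 then (1:ℂ) else ζ ^ (k:ℕ) + ζ⁻¹ ^ (k:ℕ))),
      (ζ + ζ⁻¹) * x ∈ Submodule.span ℤ (Set.range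
      (fun k : Fin d => if (k:ℕ) = 0 then (1:ℂ) else ζ ^ (k:ℕ) + ζ⁻¹ ^ (k:ℕ))) := by
  have hN0 : 0 < N := by rw [hN]; exact Nat.mul_pos hp.pos hq1
  have hζ0 : ζ ≠ 0 := hζ.ne_zero (by omega)
  have hrec : ∀ m : ℕ, (ζ + ζ⁻¹) * (ζ ^ (m+1) + ζ⁻¹ ^ (m+1)) =
      (ζ ^ (m+2) + ζ⁻¹ ^ (m+2)) + (ζ ^ m + ζ⁻¹ ^ m) := by
    intro m
    linear_combination (ζ ^ m + ζ⁻¹ ^ m) * mul_inv_cancel₀ hζ0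
  intro x hx
  refine Submodule.span_induction (fun y hy => ?_) (by rw [mul_zero]; exact Submodule.zero_mem _)
    (fun a b _ _ ha hb => by rw [mul_add]; exact Submodule.add_mem _ ha hb)
    (fun a y _ hy => by rw [mul_smul_comm]; exact Submodule.smul_mem _ _ hy) hx
  obtain ⟨k, rfl⟩ := hy
  by_cases hk : (k:ℕ) = 0
  · have hb : (fun k : Fin d => if (k:ℕ) = 0 then (1:ℂ) else ζ ^ (k:ℕ) + ζ⁻¹ ^ (k:ℕ)) k
        = 1 := by simp [hk]
    rw [hb, mul_one]
    simpa using w_mem_span hp hph h1 hq1 hζ hN hd hNodd 1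
  · obtain ⟨m, hm⟩ : ∃ m, (k:ℕ) = m + 1 := ⟨(k:ℕ) - 1, by omega⟩
    have hb : (fun k : Fin d => if (k:ℕ) = 0 then (1:ℂ) else ζ ^ (k:ℕ) + ζ⁻¹ ^ (k:ℕ)) k
        = ζ ^ (m+1) + ζ⁻¹ ^ (m+1) := by simp [hk, hm]
    rw [hb, hrec]
    exact Submodule.add_mem _ (w_mem_span hp hph h1 hq1 hζ hN hd hNodd _)
      (w_mem_span hp hph h1 hq1 hζ hN hd hNodd _)

private lemma adjoin_theta_sub_span (hp : p.Prime) (hph : p = 2 * h + 1) (h1 : 1 ≤ h)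
    (hq1 : 1 ≤ q) (hζ : IsPrimitiveRoot ζ N) (hN : N = p * q) (hd : d = h * q)
    (hNodd : N % 2 = 1) :
    ∀ x ∈ Algebra.adjoin ℤ ({ζ + ζ⁻¹} : Set ℂ), x ∈ Submodule.span ℤ (Set.range
      (fun k : Fin d => if (k:ℕ) = 0 then (1:ℂ) else ζ ^ (k:ℕ) + ζ⁻¹ ^ (k:ℕ))) := by
  have hd0 : 0 < d := by rw [hd]; exact Nat.mul_pos h1 hq1
  have h1S : (1:ℂ) ∈ Submodule.span ℤ (Set.range
      (fun k : Fin d => if (k:ℕ) = 0 then (1:ℂ) else ζ ^ (k:ℕ) + ζ⁻¹ ^ (k:ℕ))) :=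
    Submodule.subset_span ⟨⟨0, hd0⟩, by simp⟩
  have hpow : ∀ m : ℕ, (ζ + ζ⁻¹) ^ m ∈ Submodule.span ℤ (Set.range
      (fun k : Fin d => if (k:ℕ) = 0 then (1:ℂ) else ζ ^ (k:ℕ) + ζ⁻¹ ^ (k:ℕ))) := by
    intro m
    induction m with
    | zero => simpa using h1S
    | succ m ih =>
      rw [pow_succ']
      exact theta_mul_mem hp hph h1 hq1 hζ hN hd hNodd _ ih
  intro x hx
  rw [Algebra.adjoin_singleton_eq_range_aeval, AlgHom.mem_range] at hx
  obtain ⟨P, rfl⟩ := hx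
  rw [Polynomial.aeval_eq_sum_range]
  exact Submodule.sum_mem _ fun i _ => Submodule.smul_mem _ _ (hpow i)

private lemma pow_indep (hζ : IsPrimitiveRoot ζ N) (hN0 : 0 < N) (htot : N.totient = 2 * d)
    (g : Fin (2 * d) → ℚ) (hg : ∑ j, (g j : ℂ) * ζ ^ (j:ℕ) = 0) : ∀ j, g j = 0 := by
  have hd0 : 0 < d := by
    have := Nat.totient_pos.mpr hN0
    omega
  intro j0
  by_contra hne
  set P : ℚ[X] := ∑ j : Fin (2 * d), Polynomial.C (g j) * Polynomial.X ^ (j:ℕ) with hP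
  have hcoeff : P.coeff (j0:ℕ) = g j0 := by
    rw [hP, Polynomial.finset_sum_coeff]
    rw [Finset.sum_eq_single j0]
    · simp
    · intro j _ hne'
      rw [Polynomial.coeff_C_mul, Polynomial.coeff_X_pow,
        if_neg (fun hh => hne' (Fin.ext hh).symm), mul_zero]
    · simp
  have hP0 : P ≠ 0 := fun hzero => hne (by rw [← hcoeff, hzero, Polynomial.coeff_zero])
  have hval : Polynomial.aeval ζ P = 0 := by
    rw [hP, map_sum, ← hg]
    refine Finset.sum_congr rfl fun j _ => ?_
    rw [map_mul, Polynomial.aeval_C, map_pow, Polynomial.aeval_X, eq_ratCast]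
  have hdvd : minpoly ℚ ζ ∣ P := minpoly.dvd ℚ ζ hval
  have hdeg : P.natDegree ≤ 2 * d - 1 := by
    refine Polynomial.natDegree_sum_le_of_forall_le _ _ fun j _ => ?_
    refine le_trans (Polynomial.natDegree_C_mul_le _ _) ?_
    rw [Polynomial.natDegree_X_pow]
    omega
  have hmp : (minpoly ℚ ζ).natDegree = 2 * d := by
    rw [← Polynomial.cyclotomic_eq_minpoly_rat hζ hN0, Polynomial.natDegree_cyclotomic, htot]
  have := Polynomial.natDegree_le_of_dvd hdvd hP0
  omega

private lemma coeff_unique (hζ : IsPrimitiveRoot ζ N) (hN0 : 0 < N) (hd0 : 0 < d)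
    (htot : N.totient = 2 * d) (c : Fin d → ℤ)
    (hc : ∑ k : Fin d, (c k : ℂ) * (if (k:ℕ) = 0 then (1:ℂ) else ζ ^ (k:ℕ) + ζ⁻¹ ^ (k:ℕ)) = 0) :
    ∀ k, c k = 0 := by
  have hζ0 : ζ ≠ 0 := hζ.ne_zero (by omega)
  obtain ⟨e, rfl⟩ : ∃ e, d = e + 1 := ⟨d - 1, by omega⟩
  set c' : ℕ → ℤ := fun k => if hk : k < e + 1 then c ⟨k, hk⟩ else 0 with hc'def
  set g : ℕ → ℤ := fun j => if j < e then c' (e - j) else c' (j - e) with hgdef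
  set f' : ℕ → ℂ := fun k => if k = 0 then (1:ℂ) else ζ ^ k + ζ⁻¹ ^ k with hf'def
  have hcr : ∑ k ∈ range (e + 1), (c' k : ℂ) * f' k = 0 := by
    rw [← Fin.sum_univ_eq_sum_range (fun k => (c' k : ℂ) * f' k) (e + 1), ← hc]
    refine Finset.sum_congr rfl fun k _ => ?_
    have h1 : c' (k:ℕ) = c k := by rw [hc'def]; simp [k.2]
    rw [h1]
  have key : ∑ j ∈ range (2 * (e + 1)), (g j : ℂ) * ζ ^ j = 0 := by
    have lemB : ζ ^ e * ∑ k ∈ range (e + 1), (c' k : ℂ) * f' k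
        = (c' 0 : ℂ) * ζ ^ e
          + ∑ i ∈ range e, (c' (i+1) : ℂ) * (ζ ^ (e + (i+1)) + ζ ^ (e - 1 - i)) := by
      rw [Finset.sum_range_succ', mul_add, Finset.mul_sum]
      have h0 : ζ ^ e * ((c' 0 : ℂ) * f' 0) = (c' 0 : ℂ) * ζ ^ e := by
        rw [show f' 0 = 1 by simp [hf'def]]
        ring
      rw [h0, add_comm]
      congr 1
      refine Finset.sum_congr rfl fun i hi => ?_
      rw [Finset.mem_range] at hi
      have hfi : ζ ^ e * f' (i + 1) = ζ ^ (e + (i+1)) + ζ ^ (e - 1 - i) := by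
        rw [show f' (i + 1) = ζ ^ (i+1) + ζ⁻¹ ^ (i+1) by simp [hf'def], mul_add, ← pow_add]
        congr 1
        rw [inv_pow]
        have hsplit : (ζ:ℂ) ^ e = ζ ^ (e - 1 - i) * ζ ^ (i + 1) := by
          rw [← pow_add]
          congr 1
          omega
        rw [hsplit, mul_assoc, mul_inv_cancel₀ (pow_ne_zero _ hζ0), mul_one]
      rw [← hfi]
      ring
    have lemA : ∑ j ∈ range (2 * (e + 1)), (g j : ℂ) * ζ ^ j
        = (c' 0 : ℂ) * ζ ^ e
          + ∑ i ∈ range e, (c' (i+1) : ℂ) * (ζ ^ (e + (i+1)) + ζ ^ (e - 1 - i)) := by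
      rw [show 2 * (e + 1) = e + (e + 2) by ring, Finset.sum_range_add]
      have hA : ∑ j ∈ range e, (g j : ℂ) * ζ ^ j
          = ∑ i ∈ range e, (c' (i+1) : ℂ) * ζ ^ (e - 1 - i) := by
        rw [← Finset.sum_range_reflect (fun i => (c' (i+1) : ℂ) * ζ ^ (e - 1 - i)) e]
        refine Finset.sum_congr rfl fun j hj => ?_
        rw [Finset.mem_range] at hj
        have hg1 : g j = c' (e - j) := by rw [hgdef]; simp only []; rw [if_pos hj]
        rw [hg1, show e - 1 - (e - 1 - j) = j by omega, show e - 1 - j + 1 = e - j by omega]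
      have hg2 : ∀ i, g (e + i) = c' i := by
        intro i
        rw [hgdef]
        simp only []
        rw [if_neg (by omega), show e + i - e = i by omega]
      have hB : ∑ i ∈ range (e + 2), (g (e + i) : ℂ) * ζ ^ (e + i)
          = (c' 0 : ℂ) * ζ ^ e
            + ∑ i ∈ range e, (c' (i+1) : ℂ) * ζ ^ (e + (i+1)) := by
        have hstep : ∀ i ∈ range (e + 2), (g (e + i) : ℂ) * ζ ^ (e + i)
            = (c' i : ℂ) * ζ ^ (e + i) := fun i _ => by rw [hg2 i]
        rw [Finset.sum_congr rfl hstep, Finset.sum_range_succ,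
          show c' (e + 1) = 0 by rw [hc'def]; simp, Finset.sum_range_succ']
        push_cast
        rw [zero_mul, add_zero, add_comm]
        norm_num
      rw [hA, hB]
      have hcomb : ∑ i ∈ range e, (c' (i+1) : ℂ) * (ζ ^ (e + (i+1)) + ζ ^ (e - 1 - i))
          = ∑ i ∈ range e, (c' (i+1) : ℂ) * ζ ^ (e + (i+1))
            + ∑ i ∈ range e, (c' (i+1) : ℂ) * ζ ^ (e - 1 - i) := by
        rw [← Finset.sum_add_distrib]
        exact Finset.sum_congr rfl fun i _ => mul_add _ _ _
      rw [hcomb]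
      ring
    rw [lemA, ← lemB, hcr, mul_zero]
  have hall := pow_indep hζ hN0 htot (fun j : Fin (2 * (e + 1)) => (g (j:ℕ) : ℚ)) (by
    rw [← key, ← Fin.sum_univ_eq_sum_range (fun j => (g j : ℂ) * ζ ^ j) (2 * (e + 1))]
    refine Finset.sum_congr rfl fun j _ => ?_
    push_cast
    ring)
  intro k
  have hk := hall ⟨e + (k:ℕ), by omega⟩
  simp only [] at hk
  rw [hgdef] at hk
  simp only [] at hk
  rw [if_neg (by omega), show e + (k:ℕ) - e = (k:ℕ) by omega] at hk
  have hck : c' (k:ℕ) = c k := by rw [hc'def]; simp [k.2]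
  rw [hck] at hk
  exact_mod_cast hk

end Aux

open IntermediateField in
/-- Let `p` be an odd prime and `n ≥ 1`. With `ζ = e^{2πi/pⁿ}` and
`ω(k) = ζ^k + ζ^{-k}`, the family `{1, ω(1), …, ω((p-1)/2·p^{n-1} - 1)}` is a
ℤ-basis of the ring of integers of the maximal real subfield
`K_{pⁿ}⁺ = ℚ(ζ + ζ⁻¹)`: each member is such an integer, and every such integer
is a unique ℤ-linear combination of them. -/
theorem real_cyclotomic_integer_basis (p n : ℕ) (hp : p.Prime) (hodd : Odd p) (hn : 1 ≤ n) :
    (∀ k : Fin ((p - 1) * p ^ (n - 1) / 2),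
      (if (k : ℕ) = 0 then (1 : ℂ) else
        Complex.exp (2 * Real.pi * Complex.I / (p ^ n)) ^ (k : ℕ)
          + (Complex.exp (2 * Real.pi * Complex.I / (p ^ n)))⁻¹ ^ (k : ℕ)) ∈
      {x : ℂ | x ∈ IntermediateField.adjoin ℚ
          {Complex.exp (2 * Real.pi * Complex.I / (p ^ n))
            + (Complex.exp (2 * Real.pi * Complex.I / (p ^ n)))⁻¹} ∧ IsIntegral ℤ x}) ∧
    (∀ x ∈ {x : ℂ | x ∈ IntermediateField.adjoin ℚ
          {Complex.exp (2 * Real.pi * Complex.I / (p ^ n))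
            + (Complex.exp (2 * Real.pi * Complex.I / (p ^ n)))⁻¹} ∧ IsIntegral ℤ x},
      ∃! c : Fin ((p - 1) * p ^ (n - 1) / 2) → ℤ,
        x = ∑ k, (c k : ℂ) *
          (if (k : ℕ) = 0 then (1 : ℂ) else
            Complex.exp (2 * Real.pi * Complex.I / (p ^ n)) ^ (k : ℕ)
              + (Complex.exp (2 * Real.pi * Complex.I / (p ^ n)))⁻¹ ^ (k : ℕ))) := by
  obtain ⟨h, hph⟩ := hodd
  have hp2 : 2 ≤ p := hp.two_le
  have h1 : 1 ≤ h := by omega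
  set d := (p - 1) * p ^ (n - 1) / 2 with hddef
  set ζ : ℂ := Complex.exp (2 * Real.pi * Complex.I / (p ^ n)) with hζdef
  set N := p ^ n with hNdef
  set q := p ^ (n - 1) with hqdef
  have hq1 : 1 ≤ q := Nat.one_le_pow _ _ (by omega)
  have hNpq : N = p * q := by
    rw [hqdef, ← pow_succ', Nat.sub_add_cancel hn]
  have hdd : d = h * q := by
    rw [hddef, hph, show 2 * h + 1 - 1 = 2 * h by omega, mul_assoc,
      Nat.mul_div_cancel_left _ (by norm_num)]
  have hd0 : 0 < d := by rw [hdd]; exact Nat.mul_pos h1 hq1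
  have hN0 : 0 < N := by rw [hNpq]; exact Nat.mul_pos (by omega) hq1
  have hN3 : 3 ≤ N := le_trans (by omega) (Nat.le_self_pow (by omega) p)
  have hNodd : N % 2 = 1 := Nat.odd_iff.mp (Odd.pow ⟨h, hph⟩)
  have htot : N.totient = 2 * d := by
    rw [hNdef, Nat.totient_prime_pow hp (by omega), ← hqdef, hdd, hph,
      show 2 * h + 1 - 1 = 2 * h by omega]
    ring
  have hζ : IsPrimitiveRoot ζ N := by
    have H := Complex.isPrimitiveRoot_exp N (by omega)
    rw [hζdef, hNdef]
    rwa [show ((p ^ n : ℕ) : ℂ) = (p : ℂ) ^ n by push_cast; ring] at H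
  have hζ0 : ζ ≠ 0 := hζ.ne_zero (by omega)
  have hζN : ζ ^ N = 1 := hζ.pow_eq_one
  have hconjζ : (starRingEnd ℂ) ζ = ζ⁻¹ := by
    rw [hζdef, ← Complex.exp_conj, ← Complex.exp_neg]
    congr 1
    simp only [map_div₀, map_mul, map_pow, map_natCast, map_ofNat, Complex.conj_ofReal,
      Complex.conj_I]
    ring
  -- the ambient cyclotomic field
  haveI hFact : Fact p.Prime := ⟨hp⟩
  set P : ℕ+ := ⟨p, hp.pos⟩ with hPdef
  haveI hFact' : Fact (Nat.Prime (P:ℕ)) := hFact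
  have hPn : ((P ^ n : ℕ+) : ℕ) = N := by rw [PNat.pow_coe, hNdef]; rfl
  have hζint : IsIntegral ℚ ζ := (hζ.isIntegral hN0).tower_top
  haveI hKZcyc : IsCyclotomicExtension {(P:ℕ) ^ n} ℚ ℚ⟮ζ⟯ := by
    have H := IntermediateField.adjoin_simple_toSubalgebra_of_isAlgebraic hζint.isAlgebraic
    refine IsCyclotomicExtension.equiv _ _ _ (h := ?_) (.refl : ℚ⟮ζ⟯.toSubalgebra ≃ₐ[ℚ] _)
    rw [H]
    have hζ' : IsPrimitiveRoot ζ ((P:ℕ) ^ n) := by rw [← PNat.pow_coe, hPn]; exact hζ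
    exact hζ'.adjoin_isCyclotomicExtension ℚ
  set ζK : ℚ⟮ζ⟯ := ⟨ζ, IntermediateField.mem_adjoin_simple_self ℚ ζ⟩ with hζKdef
  have hζK : IsPrimitiveRoot ζK ((P ^ n : ℕ+) : ℕ) := by
    rw [hPn]
    exact IsPrimitiveRoot.coe_submonoidClass_iff.mp hζ
  haveI hIC : IsIntegralClosure (Algebra.adjoin ℤ ({ζK} : Set ℚ⟮ζ⟯)) ℤ ℚ⟮ζ⟯ :=
    IsCyclotomicExtension.Rat.isIntegralClosure_adjoin_singleton_of_prime_pow (hcycl := hKZcyc) hζK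
  have hθKZ : (ζ + ζ⁻¹) ∈ ℚ⟮ζ⟯ :=
    add_mem (IntermediateField.mem_adjoin_simple_self ℚ ζ)
      (inv_mem (IntermediateField.mem_adjoin_simple_self ℚ ζ))
  have hsub : IntermediateField.adjoin ℚ {ζ + ζ⁻¹} ≤ ℚ⟮ζ⟯ :=
    IntermediateField.adjoin_le_iff.mpr (Set.singleton_subset_iff.mpr hθKZ)
  -- every integral element of the real subfield lies in ℤ[ζ]
  have hxint : ∀ x : ℂ, x ∈ IntermediateField.adjoin ℚ {ζ + ζ⁻¹} → IsIntegral ℤ x →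
      x ∈ Algebra.adjoin ℤ ({ζ} : Set ℂ) := by
    intro x hx1 hx2
    set xK : ℚ⟮ζ⟯ := ⟨x, hsub hx1⟩ with hxKdef
    have hxKint : IsIntegral ℤ xK := by
      refine (isIntegral_algHom_iff (AlgHom.restrictScalars ℤ ℚ⟮ζ⟯.val)
        Subtype.val_injective).mp ?_
      exact hx2
    obtain ⟨y, hy⟩ := (IsIntegralClosure.isIntegral_iff
      (A := Algebra.adjoin ℤ ({ζK} : Set ℚ⟮ζ⟯))).mp hxKint
    have hxKmem : xK ∈ Algebra.adjoin ℤ ({ζK} : Set ℚ⟮ζ⟯) := hy ▸ y.2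
    have hmap : x ∈ (Algebra.adjoin ℤ ({ζK} : Set ℚ⟮ζ⟯)).map
        (AlgHom.restrictScalars ℤ ℚ⟮ζ⟯.val) := ⟨xK, hxKmem, rfl⟩
    rwa [AlgHom.map_adjoin, Set.image_singleton] at hmap
  -- conjugation fixes the adjoined elements
  have hfixA : ∀ a ∈ Algebra.adjoin ℤ ({ζ + ζ⁻¹} : Set ℂ), (starRingEnd ℂ) a = a := by
    intro a ha
    induction ha using Algebra.adjoin_induction with
    | mem y hy =>
      rw [Set.mem_singleton_iff] at hy
      subst hy
      rw [map_add, hconjζ, map_inv₀, hconjζ, inv_inv, add_comm]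
    | algebraMap r => simp
    | add u v _ _ hu hv => rw [map_add, hu, hv]
    | mul u v _ _ hu hv => rw [map_mul, hu, hv]
  have hfixK : ∀ x ∈ IntermediateField.adjoin ℚ ({ζ + ζ⁻¹} : Set ℂ),
      (starRingEnd ℂ) x = x := by
    intro x hx
    induction hx using IntermediateField.adjoin_induction with
    | mem y hy =>
      rw [Set.mem_singleton_iff] at hy
      subst hy
      rw [map_add, hconjζ, map_inv₀, hconjζ, inv_inv, add_comm]
    | algebraMap r => rw [show (algebraMap ℚ ℂ) r = (r : ℂ) from eq_ratCast _ r, map_ratCast]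
    | add u v _ _ hu hv => rw [map_add, hu, hv]
    | inv u _ hu => rw [map_inv₀, hu]
    | mul u v _ _ hu hv => rw [map_mul, hu, hv]
  -- decomposition over ℤ[ζ + ζ⁻¹]
  have hdecomp : ∀ x ∈ Algebra.adjoin ℤ ({ζ} : Set ℂ), ∃ a b : ℂ,
      a ∈ Algebra.adjoin ℤ ({ζ + ζ⁻¹} : Set ℂ) ∧ b ∈ Algebra.adjoin ℤ ({ζ + ζ⁻¹} : Set ℂ) ∧
      x = a + b * ζ := by
    have hζζ : ζ * ζ = (ζ + ζ⁻¹) * ζ - 1 := by field_simp; ring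
    intro x hx
    induction hx using Algebra.adjoin_induction with
    | mem y hy =>
      rw [Set.mem_singleton_iff] at hy
      subst hy
      exact ⟨0, 1, zero_mem _, one_mem _, by ring⟩
    | algebraMap r =>
      exact ⟨algebraMap ℤ ℂ r, 0, Subalgebra.algebraMap_mem _ _, zero_mem _, by ring⟩
    | add u v _ _ hu hv =>
      obtain ⟨a, b, ha, hb, rfl⟩ := hu
      obtain ⟨a', b', ha', hb', rfl⟩ := hv
      exact ⟨a + a', b + b', add_mem ha ha', add_mem hb hb', by ring⟩
    | mul u v _ _ hu hv =>
      obtain ⟨a, b, ha, hb, rfl⟩ := hu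
      obtain ⟨a', b', ha', hb', rfl⟩ := hv
      refine ⟨a * a' - b * b', a * b' + b * a' + b * b' * (ζ + ζ⁻¹),
        sub_mem (mul_mem ha ha') (mul_mem hb hb'),
        add_mem (add_mem (mul_mem ha hb') (mul_mem hb ha'))
          (mul_mem (mul_mem hb hb') (Algebra.subset_adjoin rfl)), ?_⟩
      linear_combination (b * b') * hζζ
  have hζne : ζ ≠ ζ⁻¹ := by
    intro heq
    have h2 : ζ ^ 2 = 1 := by
      rw [sq]
      nth_rewrite 2 [heq]
      exact mul_inv_cancel₀ hζ0
    have hdvd : N ∣ 2 := (hζ.pow_eq_one_iff_dvd 2).mp h2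
    have := Nat.le_of_dvd (by norm_num) hdvd
    omega
  -- membership of each element of the real subfield's integers in the span
  have hxS : ∀ x : ℂ, x ∈ IntermediateField.adjoin ℚ {ζ + ζ⁻¹} → IsIntegral ℤ x →
      x ∈ Submodule.span ℤ (Set.range
        (fun k : Fin d => if (k:ℕ) = 0 then (1:ℂ) else ζ ^ (k:ℕ) + ζ⁻¹ ^ (k:ℕ))) := by
    intro x hx1 hx2
    obtain ⟨a, b, ha, hb, rfl⟩ := hdecomp x (hxint x hx1 hx2)
    have hcx : (starRingEnd ℂ) (a + b * ζ) = a + b * ζ := hfixK _ hx1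
    rw [map_add, map_mul, hfixA a ha, hfixA b hb, hconjζ] at hcx
    have hb0 : b = 0 := by
      by_contra hb0
      exact hζne (mul_left_cancel₀ hb0 (add_left_cancel hcx)).symm
    rw [hb0, zero_mul, add_zero]
    exact adjoin_theta_sub_span hp hph h1 hq1 hζ hNpq hdd hNodd a ha
  -- conclude
  constructor
  · intro k
    have hwint : ∀ m : ℕ, IsIntegral ℤ (ζ ^ m + ζ⁻¹ ^ m) := by
      intro m
      have hζi : IsIntegral ℤ ζ := hζ.isIntegral hN0
      have hζinv : ζ⁻¹ = ζ ^ (N - 1) := by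
        refine (eq_inv_of_mul_eq_one_left ?_).symm
        rw [← pow_succ, show N - 1 + 1 = N by omega, hζN]
      exact (hζi.pow m).add (by rw [hζinv, ← pow_mul]; exact hζi.pow _)
    have hwK : ∀ m : ℕ, ζ ^ m + ζ⁻¹ ^ m ∈ IntermediateField.adjoin ℚ
        ({ζ + ζ⁻¹} : Set ℂ) := by
      have hθmem : (ζ + ζ⁻¹) ∈ IntermediateField.adjoin ℚ ({ζ + ζ⁻¹} : Set ℂ) :=
        IntermediateField.subset_adjoin ℚ _ rfl
      have h2K : (2:ℂ) ∈ IntermediateField.adjoin ℚ ({ζ + ζ⁻¹} : Set ℂ) := by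
        have := IntermediateField.algebraMap_mem
          (IntermediateField.adjoin ℚ ({ζ + ζ⁻¹} : Set ℂ)) (2:ℚ)
        simpa using this
      have hrec : ∀ m : ℕ, ζ ^ (m+2) + ζ⁻¹ ^ (m+2) =
          (ζ + ζ⁻¹) * (ζ ^ (m+1) + ζ⁻¹ ^ (m+1)) - (ζ ^ m + ζ⁻¹ ^ m) := by
        intro m
        linear_combination (-(ζ ^ m + ζ⁻¹ ^ m)) * mul_inv_cancel₀ hζ0
      have key : ∀ m : ℕ, (ζ ^ m + ζ⁻¹ ^ m ∈ IntermediateField.adjoin ℚ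
          ({ζ + ζ⁻¹} : Set ℂ)) ∧ (ζ ^ (m+1) + ζ⁻¹ ^ (m+1) ∈ IntermediateField.adjoin ℚ
          ({ζ + ζ⁻¹} : Set ℂ)) := by
        intro m
        induction m with
        | zero =>
          constructor
          · rw [show (ζ:ℂ) ^ 0 + ζ⁻¹ ^ 0 = 2 by norm_num]
            exact h2K
          · rw [pow_one, pow_one]
            exact hθmem
        | succ m ih =>
          exact ⟨ih.2, by rw [hrec m]; exact sub_mem (mul_mem hθmem ih.2) ih.1⟩
      exact fun m => (key m).1
    constructor
    · by_cases hk : (k:ℕ) = 0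
      · rw [if_pos hk]
        exact one_mem _
      · rw [if_neg hk]
        exact hwK _
    · by_cases hk : (k:ℕ) = 0
      · rw [if_pos hk]
        exact isIntegral_one
      · rw [if_neg hk]
        exact hwint _
  · rintro x ⟨hx1, hx2⟩
    obtain ⟨c, hcx⟩ := (Submodule.mem_span_range_iff_exists_fun ℤ).mp (hxS x hx1 hx2)
    refine ⟨c, ?_, ?_⟩
    · rw [← hcx]
      exact (Finset.sum_congr rfl fun k _ => by rw [zsmul_eq_mul]).symm
    · intro c' hc'
      funext k
      have hzero : ∑ k : Fin d, ((c' k - c k : ℤ) : ℂ) *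
          (if (k:ℕ) = 0 then (1:ℂ) else ζ ^ (k:ℕ) + ζ⁻¹ ^ (k:ℕ)) = 0 := by
        have hcx' : ∑ k : Fin d, (c k : ℂ) *
            (if (k:ℕ) = 0 then (1:ℂ) else ζ ^ (k:ℕ) + ζ⁻¹ ^ (k:ℕ)) = x := by
          rw [← hcx]
          exact Finset.sum_congr rfl fun k _ => by rw [zsmul_eq_mul]
        rw [show (0:ℂ) = x - x from (sub_self x).symm]
        nth_rewrite 1 [hc']
        rw [← hcx']
        rw [← Finset.sum_sub_distrib]
        refine Finset.sum_congr rfl fun k _ => ?_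
        push_cast
        ring
      have := coeff_unique hζ hN0 hd0 htot (fun k => c' k - c k) hzero k
      omega
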